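/- Let n ≥ 1 be an integer, a ∈ (-1,1) and L ≥ 0. Let B : ℝⁿ → Sym_n(ℝ) be L-Lipschitz (symmetric n×n matrix-valued) with B(0) = Id_n, and for x ∈ ℝⁿ let A(x) ∈ Sym_{n+1}(ℝ) be the block-diagonal matrix with blocks B(x) and 1. For X = (x,y) ∈ ℝⁿ × ℝ with X ≠ 0 and y ≠ 0, define the vector field V(X) = |y|^a A(x) (X/|X|). Then there exists a constant C = C(n, L, a) > 0 such that at every point X = (x,y) with 0 < |X| ≤ 1 and y ≠ 0 at which B is differentiable at x, the vector field V is differentiable at X and | div V(X) − (n+a) |y|^a / |X| | ≤ C |y|^a. -/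

import Mathlib

open scoped RealInnerProductSpace
open ContinuousLinearMap

abbrev Ee (n : ℕ) := EuclideanSpace ℝ (Fin n)

set_option maxHeartbeats 2000000 in
/-- Let `n ≥ 1`, `a ∈ (−1,1)`, `L ≥ 0`. Let `B : ℝⁿ → Sym_n(ℝ)` be `L`-Lipschitz with
`B(0) = Id`, and let `A(x)` be block diagonal with blocks `B(x)` and `1`, acting on
`ℝⁿ × ℝ` by `A(x)(u,t) = (B(x)u, t)`. For `X = (x,y)` with `X ≠ 0`, `y ≠ 0` define
`V(X) = |y|^a A(x) (X/|X|)`, where `|X| = (|x|² + y²)^{1/2}`. Then there is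
`C = C(n,L,a) > 0` such that at every point `X = (x,y)` with `0 < |X| ≤ 1`, `y ≠ 0`
at which `B` is differentiable at `x`, the field `V` is differentiable at `X` and
`|div V(X) − (n+a)|y|^a/|X|| ≤ C |y|^a`. -/
theorem statement5 (n : ℕ) (hn : 1 ≤ n) (a L : ℝ) (ha : a ∈ Set.Ioo (-1 : ℝ) 1)
    (hL : 0 ≤ L)
    (B : EuclideanSpace ℝ (Fin n) → (EuclideanSpace ℝ (Fin n) →L[ℝ] EuclideanSpace ℝ (Fin n)))
    (hsym : ∀ x u v, ⟪B x u, v⟫ = ⟪u, B x v⟫)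
    (hLip : ∀ x x', ‖B x - B x'‖ ≤ L * ‖x - x'‖)
    (hB0 : B 0 = ContinuousLinearMap.id ℝ (EuclideanSpace ℝ (Fin n))) :
    ∃ C > (0 : ℝ), ∀ (x : EuclideanSpace ℝ (Fin n)) (y : ℝ),
      0 < Real.sqrt (‖x‖ ^ 2 + y ^ 2) → Real.sqrt (‖x‖ ^ 2 + y ^ 2) ≤ 1 → y ≠ 0 →
      DifferentiableAt ℝ B x →
      (DifferentiableAt ℝ
          (fun X : EuclideanSpace ℝ (Fin n) × ℝ =>
            (|X.2| ^ a / Real.sqrt (‖X.1‖ ^ 2 + X.2 ^ 2)) • (B X.1 X.1, X.2)) (x, y)) ∧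
      |((∑ i : Fin n,
            (fderiv ℝ
                (fun X : EuclideanSpace ℝ (Fin n) × ℝ =>
                  (|X.2| ^ a / Real.sqrt (‖X.1‖ ^ 2 + X.2 ^ 2)) • (B X.1 X.1, X.2)) (x, y)
              ((EuclideanSpace.single i (1 : ℝ)), (0 : ℝ))).1 i)
          + (fderiv ℝ
                (fun X : EuclideanSpace ℝ (Fin n) × ℝ =>
                  (|X.2| ^ a / Real.sqrt (‖X.1‖ ^ 2 + X.2 ^ 2)) • (B X.1 X.1, X.2)) (x, y)
              ((0 : EuclideanSpace ℝ (Fin n)), (1 : ℝ))).2)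
        - ((n : ℝ) + a) * |y| ^ a / Real.sqrt (‖x‖ ^ 2 + y ^ 2)| ≤ C * |y| ^ a := by
  have hC : (0 : ℝ) < (2 * (n : ℝ) + 1) * L + 1 := by
    have : (0:ℝ) ≤ (n:ℝ) := Nat.cast_nonneg n
    nlinarith
  refine ⟨(2 * (n : ℝ) + 1) * L + 1, hC, ?_⟩
  intro x y hrpos hrle hy hBd
  have hq0 : 0 < ‖x‖ ^ 2 + y ^ 2 := by positivity
  set r : ℝ := Real.sqrt (‖x‖ ^ 2 + y ^ 2) with hrdef
  have hr : 0 < r := Real.sqrt_pos.mpr hq0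
  set s : ℝ := |y| ^ a with hsdef
  have hs : 0 < s := Real.rpow_pos_of_pos (abs_pos.mpr hy) a
  set sg : ℝ := (SignType.sign y : ℝ) with hsgdef
  set B' := fderiv ℝ B x with hB'def
  set Dq : (Ee n × ℝ) →L[ℝ] ℝ :=
    (2 : ℕ) • (innerSL ℝ x).comp (fst ℝ (Ee n) ℝ) + (2 * y) • snd ℝ (Ee n) ℝ with hDq
  have hq1 : HasFDerivAt (fun X : Ee n × ℝ => ‖X.1‖ ^ 2)
      ((2 : ℕ) • (innerSL ℝ x).comp (fst ℝ (Ee n) ℝ)) ((x, y) : Ee n × ℝ) :=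
    (hasFDerivAt_fst (𝕜 := ℝ) (p := ((x, y) : Ee n × ℝ))).norm_sq
  have hq2 : HasFDerivAt (fun X : Ee n × ℝ => X.2 ^ 2) ((2 * y) • snd ℝ (Ee n) ℝ)
      ((x, y) : Ee n × ℝ) := by
    have h0 := HasDerivAt.comp_hasFDerivAt ((x, y) : Ee n × ℝ)
      (hasDerivAt_pow 2 y) (hasFDerivAt_snd (𝕜 := ℝ) (p := ((x, y) : Ee n × ℝ)))
    rw [show (2 * y) = ((2:ℕ):ℝ) * y ^ (2 - 1) by norm_num]
    exact h0
  have hq : HasFDerivAt (fun X : Ee n × ℝ => ‖X.1‖ ^ 2 + X.2 ^ 2) Dq ((x, y) : Ee n × ℝ) :=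
    hq1.add hq2
  have hsqrt : HasFDerivAt (fun X : Ee n × ℝ => Real.sqrt (‖X.1‖ ^ 2 + X.2 ^ 2))
      ((1 / (2 * r)) • Dq) ((x, y) : Ee n × ℝ) := hq.sqrt (by simpa using hq0.ne')
  set Dinv : (Ee n × ℝ) →L[ℝ] ℝ := (-(r ^ 2)⁻¹) • ((1 / (2 * r)) • Dq) with hDinv
  have hinv : HasFDerivAt (fun X : Ee n × ℝ => (Real.sqrt (‖X.1‖ ^ 2 + X.2 ^ 2))⁻¹) Dinv
      ((x, y) : Ee n × ℝ) :=
    (hasDerivAt_inv hr.ne').comp_hasFDerivAt (f := fun X : Ee n × ℝ => Real.sqrt (‖X.1‖ ^ 2 + X.2 ^ 2)) ((x, y) : Ee n × ℝ) hsqrt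
  set Dnu : (Ee n × ℝ) →L[ℝ] ℝ := (a * |y| ^ (a - 1) * sg) • snd ℝ (Ee n) ℝ with hDnu
  have hnum : HasFDerivAt (fun X : Ee n × ℝ => |X.2| ^ a) Dnu ((x, y) : Ee n × ℝ) := by
    have h1 : HasDerivAt (fun t : ℝ => |t| ^ a) (a * |y| ^ (a - 1) * sg) y := by
      have hab : HasDerivAt (fun t : ℝ => |t|) sg y := hasDerivAt_abs hy
      have h2 : HasDerivAt (fun t : ℝ => t ^ a) (a * |y| ^ (a - 1)) |y| :=
        Real.hasDerivAt_rpow_const (Or.inl (abs_ne_zero.mpr hy))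
      exact h2.comp y hab
    exact h1.comp_hasFDerivAt _ (hasFDerivAt_snd (𝕜 := ℝ) (p := ((x, y) : Ee n × ℝ)))
  set Dc : (Ee n × ℝ) →L[ℝ] ℝ := s • Dinv + r⁻¹ • Dnu with hDc
  have hc : HasFDerivAt
      (fun X : Ee n × ℝ => |X.2| ^ a * (Real.sqrt (‖X.1‖ ^ 2 + X.2 ^ 2))⁻¹) Dc
      ((x, y) : Ee n × ℝ) := hnum.mul hinv
  set Df : (Ee n × ℝ) →L[ℝ] (Ee n × ℝ) :=
    ((B x).comp (fst ℝ (Ee n) ℝ) + ((B'.comp (fst ℝ (Ee n) ℝ)).flip x)).prod (snd ℝ (Ee n) ℝ)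
    with hDf
  have hB1 : HasFDerivAt (fun X : Ee n × ℝ => B X.1) (B'.comp (fst ℝ (Ee n) ℝ))
      ((x, y) : Ee n × ℝ) :=
    hBd.hasFDerivAt.comp _ (hasFDerivAt_fst (𝕜 := ℝ) (p := ((x, y) : Ee n × ℝ)))
  have hg1 : HasFDerivAt (fun X : Ee n × ℝ => B X.1 X.1)
      ((B x).comp (fst ℝ (Ee n) ℝ) + ((B'.comp (fst ℝ (Ee n) ℝ)).flip x)) ((x, y) : Ee n × ℝ) :=
    hB1.clm_apply (hasFDerivAt_fst (𝕜 := ℝ) (p := ((x, y) : Ee n × ℝ)))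
  have hf : HasFDerivAt (fun X : Ee n × ℝ => ((B X.1 X.1 : Ee n), X.2)) Df
      ((x, y) : Ee n × ℝ) := hg1.prodMk (hasFDerivAt_snd (𝕜 := ℝ) (p := ((x, y) : Ee n × ℝ)))
  set DV : (Ee n × ℝ) →L[ℝ] (Ee n × ℝ) :=
    (s * r⁻¹) • Df + Dc.smulRight (B x x, y) with hDV
  have hV : HasFDerivAt
      (fun X : Ee n × ℝ =>
        (|X.2| ^ a * (Real.sqrt (‖X.1‖ ^ 2 + X.2 ^ 2))⁻¹) • ((B X.1 X.1 : Ee n), X.2))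
      DV ((x, y) : Ee n × ℝ) := hc.smul hf
  -- evaluations
  have hval1 : ∀ i : Fin n, (DV (EuclideanSpace.single i (1:ℝ), (0:ℝ))).1 i =
      s * r⁻¹ * ((B x (EuclideanSpace.single i 1)) i + (B' (EuclideanSpace.single i 1)) x i)
        - s * (x i) * (B x x i) / r ^ 3 := by
    intro i
    simp only [hDV, hDf, hDc, hDinv, hDnu, hDq, ContinuousLinearMap.add_apply,
      ContinuousLinearMap.smul_apply, ContinuousLinearMap.smulRight_apply,
      ContinuousLinearMap.prod_apply, ContinuousLinearMap.comp_apply,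
      ContinuousLinearMap.flip_apply, ContinuousLinearMap.coe_fst',
      ContinuousLinearMap.coe_snd', innerSL_apply_apply, Prod.fst_add, Prod.smul_fst,
      PiLp.add_apply, PiLp.smul_apply, smul_eq_mul]
    simp [EuclideanSpace.inner_single_right]
    field_simp
    ring
  have hval2 : (DV ((0 : Ee n), (1:ℝ))).2 = s * r⁻¹ - s * y ^ 2 / r ^ 3 + a * s * r⁻¹ := by
    simp only [hDV, hDf, hDc, hDinv, hDnu, hDq, ContinuousLinearMap.add_apply,
      ContinuousLinearMap.smul_apply, ContinuousLinearMap.smulRight_apply,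
      ContinuousLinearMap.prod_apply, ContinuousLinearMap.comp_apply,
      ContinuousLinearMap.flip_apply, ContinuousLinearMap.coe_fst',
      ContinuousLinearMap.coe_snd', innerSL_apply_apply, Prod.snd_add, Prod.smul_snd,
      smul_eq_mul]
    simp
    have hsgy : sg * y = |y| := by
      rcases hy.lt_or_gt with h | h <;> simp [hsgdef, h, abs_of_pos, abs_of_neg]
    have habs : |y| ^ (a - 1) * |y| = s := by
      rw [hsdef, ← Real.rpow_add_one (abs_ne_zero.mpr hy), sub_add_cancel]
    have key : (a * |y| ^ (a - 1) * sg) * y = a * s := by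
      rw [mul_assoc (a * |y| ^ (a - 1)) sg y, hsgy, mul_assoc a _ _, habs]
    clear_value DV Df Dc Dinv Dnu Dq B' s sg r
    linear_combination r⁻¹ * key
  -- basic bounds
  have hcoord : ∀ (v : Ee n) (i : Fin n), |v i| ≤ ‖v‖ := by
    intro v i
    have h := abs_real_inner_le_norm (EuclideanSpace.single i (1:ℝ)) v
    simpa [EuclideanSpace.inner_single_left] using h
  have hxr : ‖x‖ ≤ r := by
    rw [hrdef]
    calc ‖x‖ = Real.sqrt (‖x‖ ^ 2) := (Real.sqrt_sq (norm_nonneg x)).symm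
    _ ≤ Real.sqrt (‖x‖ ^ 2 + y ^ 2) := Real.sqrt_le_sqrt (le_add_of_nonneg_right (sq_nonneg y))
  have hB'le : ‖B'‖ ≤ L := by
    have hlip : LipschitzWith ⟨L, hL⟩ B := by
      apply LipschitzWith.of_dist_le_mul
      intro p q
      rw [dist_eq_norm, dist_eq_norm]
      exact hLip p q
    exact norm_fderiv_le_of_lipschitz ℝ hlip (x₀ := x)
  have hEnorm : ‖B x - 1‖ ≤ L * ‖x‖ := by
    have h := hLip x 0
    rw [hB0, sub_zero] at h
    have hid : (1 : Ee n →L[ℝ] Ee n) = ContinuousLinearMap.id ℝ (Ee n) := rfl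
    rw [hid]
    exact h
  have hsingle : ∀ i : Fin n, ‖EuclideanSpace.single i (1:ℝ)‖ = 1 := by
    intro i; simp [EuclideanSpace.norm_single]
  -- sums
  have hT1 : |(∑ i : Fin n, (B x (EuclideanSpace.single i 1)) i) - n| ≤ n * (L * ‖x‖) := by
    have he : (∑ i : Fin n, (B x (EuclideanSpace.single i 1)) i) - n
        = ∑ i : Fin n, ((B x - 1) (EuclideanSpace.single i (1:ℝ)) : Ee n) i := by
      simp [ContinuousLinearMap.sub_apply, Finset.sum_sub_distrib,
        EuclideanSpace.single_apply]
    rw [he]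
    refine (Finset.abs_sum_le_sum_abs _ _).trans ?_
    have each : ∀ i ∈ Finset.univ, |((B x - 1) (EuclideanSpace.single i (1:ℝ)) : Ee n) i|
        ≤ L * ‖x‖ := by
      intro i _
      refine (hcoord _ i).trans ?_
      calc ‖(B x - 1) (EuclideanSpace.single i (1:ℝ))‖
          ≤ ‖B x - 1‖ * ‖EuclideanSpace.single i (1:ℝ)‖ := le_opNorm _ _
        _ = ‖B x - 1‖ := by rw [hsingle i, mul_one]
        _ ≤ L * ‖x‖ := hEnorm
    have := Finset.sum_le_card_nsmul Finset.univ _ (L * ‖x‖) each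
    simpa [Finset.card_univ, nsmul_eq_mul] using this
  have hS2 : |∑ i : Fin n, (B' (EuclideanSpace.single i 1)) x i| ≤ n * (L * ‖x‖) := by
    refine (Finset.abs_sum_le_sum_abs _ _).trans ?_
    have each : ∀ i ∈ Finset.univ, |((B' (EuclideanSpace.single i (1:ℝ))) x : Ee n) i|
        ≤ L * ‖x‖ := by
      intro i _
      refine (hcoord _ i).trans ?_
      calc ‖(B' (EuclideanSpace.single i (1:ℝ))) x‖
          ≤ ‖B' (EuclideanSpace.single i (1:ℝ))‖ * ‖x‖ := le_opNorm _ _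
        _ ≤ (‖B'‖ * ‖EuclideanSpace.single i (1:ℝ)‖) * ‖x‖ := by
            gcongr; exact le_opNorm _ _
        _ = ‖B'‖ * ‖x‖ := by rw [hsingle i, mul_one]
        _ ≤ L * ‖x‖ := by gcongr
    have := Finset.sum_le_card_nsmul Finset.univ _ (L * ‖x‖) each
    simpa [Finset.card_univ, nsmul_eq_mul] using this
  have hI : (∑ i : Fin n, x i * (B x x) i) = ⟪x, B x x⟫ := by
    simp [PiLp.inner_apply]
    exact Finset.sum_congr rfl fun i _ => mul_comm _ _
  have hJ : |⟪x, B x x⟫ - ‖x‖ ^ 2| ≤ L * ‖x‖ ^ 3 := by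
    have he : ⟪x, B x x⟫ - ‖x‖ ^ 2 = ⟪x, ((B x - 1) x : Ee n)⟫ := by
      rw [ContinuousLinearMap.sub_apply, inner_sub_right, ContinuousLinearMap.one_apply,
        real_inner_self_eq_norm_sq]
    rw [he]
    refine (abs_real_inner_le_norm _ _).trans ?_
    calc ‖x‖ * ‖((B x - 1) x : Ee n)‖ ≤ ‖x‖ * (‖B x - 1‖ * ‖x‖) := by
          gcongr; exact le_opNorm _ _
      _ ≤ ‖x‖ * ((L * ‖x‖) * ‖x‖) := by gcongr
      _ = L * ‖x‖ ^ 3 := by ring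
  -- assemble
  constructor
  · have hd := hV.differentiableAt
    simpa [div_eq_mul_inv] using hd
  · simp only [div_eq_mul_inv]
    rw [hV.fderiv]
    have hsum : (∑ i : Fin n, (DV (EuclideanSpace.single i (1:ℝ), (0:ℝ))).1 i)
        = s * r⁻¹ * ((∑ i : Fin n, (B x (EuclideanSpace.single i 1)) i)
            + (∑ i : Fin n, (B' (EuclideanSpace.single i 1)) x i))
          - s / r ^ 3 * (∑ i : Fin n, x i * (B x x) i) := by
      rw [Finset.sum_congr rfl fun i _ => hval1 i,
        Finset.sum_congr (rfl : (Finset.univ : Finset (Fin n)) = Finset.univ)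
          (fun i _ => show
            s * r⁻¹ * ((B x (EuclideanSpace.single i 1)) i
              + (B' (EuclideanSpace.single i 1)) x i)
              - s * x i * (B x x) i / r ^ 3
            = s * r⁻¹ * ((B x (EuclideanSpace.single i 1)) i
              + (B' (EuclideanSpace.single i 1)) x i)
              - s / r ^ 3 * (x i * (B x x) i) from by ring),
        Finset.sum_sub_distrib, ← Finset.mul_sum, ← Finset.mul_sum,
        Finset.sum_add_distrib]
    rw [hsum, hval2, hI]
    set S1 : ℝ := ∑ i : Fin n, (B x (EuclideanSpace.single i 1)) i with hS1def
    set S2 : ℝ := ∑ i : Fin n, (B' (EuclideanSpace.single i 1)) x i with hS2def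
    set I : ℝ := ⟪x, B x x⟫ with hIdef
    have hr2 : r ^ 2 = ‖x‖ ^ 2 + y ^ 2 := Real.sq_sqrt hq0.le
    have hkey : s * r⁻¹ * (S1 + S2) - s / r ^ 3 * I
          + (s * r⁻¹ - s * y ^ 2 / r ^ 3 + a * s * r⁻¹) - (↑n + a) * s * r⁻¹
        = s * r⁻¹ * ((S1 - n) + S2) - s * (I - ‖x‖ ^ 2) / r ^ 3 := by
      have hrne : r ≠ 0 := hr.ne'
      field_simp
      linear_combination hr2
    rw [hkey]
    -- final bound
    have hT1' : |S1 - n| ≤ n * (L * r) := hT1.trans (by gcongr)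
    have hS2' : |S2| ≤ n * (L * r) := hS2.trans (by gcongr)
    have hJ' : |I - ‖x‖ ^ 2| ≤ L * r ^ 3 := by
      refine hJ.trans ?_
      have h3 : ‖x‖ ^ 3 ≤ r ^ 3 := pow_le_pow_left₀ (norm_nonneg x) hxr 3
      gcongr
    have hU : |(S1 - n) + S2| ≤ 2 * (n * (L * r)) := by
      calc |(S1 - n) + S2| ≤ |S1 - n| + |S2| := abs_add_le _ _
        _ ≤ n * (L * r) + n * (L * r) := add_le_add hT1' hS2'
        _ = 2 * (n * (L * r)) := by ring
    have b1 : |s * r⁻¹ * ((S1 - n) + S2)| ≤ 2 * n * L * s := by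
      rw [abs_mul, abs_of_pos (show (0:ℝ) < s * r⁻¹ by positivity)]
      calc s * r⁻¹ * |(S1 - n) + S2| ≤ s * r⁻¹ * (2 * (n * (L * r))) := by gcongr
        _ = 2 * n * L * s := by field_simp
    have b2 : |s * (I - ‖x‖ ^ 2) / r ^ 3| ≤ L * s := by
      rw [abs_div, abs_mul, abs_of_pos hs, abs_of_pos (show (0:ℝ) < r ^ 3 by positivity)]
      calc s * |I - ‖x‖ ^ 2| / r ^ 3 ≤ s * (L * r ^ 3) / r ^ 3 := by gcongr
        _ = L * s := by field_simp
    calc |s * r⁻¹ * ((S1 - n) + S2) - s * (I - ‖x‖ ^ 2) / r ^ 3|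
        ≤ |s * r⁻¹ * ((S1 - n) + S2)| + |s * (I - ‖x‖ ^ 2) / r ^ 3| := abs_sub _ _
      _ ≤ 2 * n * L * s + L * s := add_le_add b1 b2
      _ ≤ ((2 * (n : ℝ) + 1) * L + 1) * s := by
          have h1 : ((2 * (n : ℝ) + 1) * L + 1) * s = (2 * (n:ℝ) * L * s + L * s) + s := by
            ring
          rw [h1]; exact le_add_of_nonneg_right hs.le
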